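/- Define N : ℝ² → ℝ by N(x₁,x₂) = √(x₁² + x₂²) if x₁x₂ ≥ 0 and N(x₁,x₂) = |x₁| + |x₂| if x₁x₂ ≤ 0 (the ℓ₂–ℓ₁ norm). Then sup{ (1+t)·N(u−v)/N(u−tv) : u, v ∈ ℝ², N(u) = N(v) = 1, 0 < t < 1 } = 2√2. -/

import Mathlib

set_option maxHeartbeats 1000000

/-- The `ℓ₂–ℓ₁` norm on `ℝ²`. -/
noncomputable def l2l1Norm (x : ℝ × ℝ) : ℝ :=
  if 0 ≤ x.1 * x.2 then Real.sqrt (x.1 ^ 2 + x.2 ^ 2) else |x.1| + |x.2|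

private lemma dw_e1 (p q r s t : ℝ) (ht0 : 0 < t) (ht1 : t < 1)
    (hu : p^2+q^2 = 1) (hv : r^2+s^2 ≤ 1) :
    (1+t)^2*((p-r)^2+(q-s)^2) ≤ 4*((p-t*r)^2+(q-t*s)^2) := by
  have h2P : 0 ≤ 1 + (r^2+s^2) + 2*(p*r+q*s) := by
    nlinarith [sq_nonneg (1+(p*r+q*s)), sq_nonneg (p*s-q*r)]
  have hbr : 0 ≤ (3+t) + 2*(1-t)*(p*r+q*s) - (1+3*t)*(r^2+s^2) := by
    rcases le_or_gt 0 (p*r+q*s) with hP | hP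
    · nlinarith [mul_nonneg (sub_nonneg.2 ht1.le) hP]
    · nlinarith [mul_nonneg (sub_nonneg.2 ht1.le) h2P, mul_nonneg ht0.le (sub_nonneg.2 hv)]
  nlinarith [mul_nonneg (sub_nonneg.2 ht1.le) hbr]

private lemma dw_e2 (d e t : ℝ) (ht0 : 0 < t) (ht1 : t < 1) (hd : d^2 = 1) (he : e^2 ≤ 1) :
    (1+t)^2*(d-e)^2 ≤ 8*(d-t*e)^2 := by
  have h1 : e*d ≤ 1 := by nlinarith [sq_nonneg (d-e)]
  have h2 : -1 ≤ e*d := by nlinarith [sq_nonneg (d+e)]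
  nlinarith [mul_nonneg (sub_nonneg.2 ht1.le) (sub_nonneg.2 h1),
    mul_nonneg (mul_nonneg (sub_nonneg.2 ht1.le) ht0.le) (sub_nonneg.2 h1),
    mul_nonneg (sub_nonneg.2 ht1.le) (by linarith : (0:ℝ) ≤ 1 + e*d),
    mul_nonneg (mul_nonneg (sub_nonneg.2 ht1.le) (sub_nonneg.2 ht1.le)) (sub_nonneg.2 h1),
    sq_nonneg (1-t*e*d), sq_nonneg (d-t*e), mul_pos ht0 ht0]

private lemma dw_e3A (p r s t : ℝ) (ht0 : 0 < t) (ht1 : t < 1) (hpq : p * (p+1) ≤ 0)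
    (hrs : 0 ≤ r * s) (hb : r ^ 2 + s ^ 2 = 1) :
    (1 + t) ^ 2 * ((p - r) ^ 2 + (p + 1 - s) ^ 2) ≤ 8 * ((p - t * r) ^ 2 + (p + 1 - t * s) ^ 2) := by
  have hp1 : -1 ≤ p := by nlinarith
  have hp2 : p ≤ 0 := by nlinarith
  have hs1 : s ≤ 1 := by nlinarith [sq_nonneg r, sq_nonneg (1-s)]
  have hA12 : (1:ℝ)/2 ≤ p^2+(p+1)^2 := by nlinarith [sq_nonneg (2*p+1)]
  have hid : 8*((p-t*r)^2+(p+1-t*s)^2) - (1+t)^2*((p-r)^2+(p+1-s)^2)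
      = 8*(1-t)*((p^2+(p+1)^2) - t) - (t^2-6*t+1)*((p-r)^2+(p+1-s)^2) := by
    linear_combination (-8*(1-t)*t) * hb
  rcases le_or_gt (t^2 - 6*t + 1) 0 with hA | hA
  · rcases le_or_gt t (1/2) with h12 | h12
    · have h1a : (0:ℝ) ≤ (p^2+(p+1)^2) - t := by linarith
      have h1b : (0:ℝ) ≤ 1 - t := by linarith
      linarith [hid, mul_nonneg h1b h1a, mul_nonneg (neg_nonneg.2 hA) (by positivity : (0:ℝ) ≤ (p-r)^2+(p+1-s)^2)]
    · rcases le_or_gt 0 r with hr | hr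
      · have h7 : (0:ℝ) < 7 - 2*t - t^2 := by nlinarith
        have hA2 : (0:ℝ) ≤ 6*t - 1 - t^2 := by linarith
        have hE : 2*p^2 ≤ (p-r)^2+(p+1-s)^2 := by
          nlinarith [mul_nonneg (neg_nonneg.2 hp2) hr, mul_nonneg (by linarith : (0:ℝ) ≤ 1 - s) (by linarith : (0:ℝ) ≤ 1 + p)]
        have hm := mul_le_mul_of_nonneg_left hE hA2
        have hQ7 : 0 ≤ (7-2*t-t^2) * ((7-2*t-t^2)*p^2 + 8*(1-t)*p + 4*(1-t)^2) := by
          have e : (7-2*t-t^2) * ((7-2*t-t^2)*p^2 + 8*(1-t)*p + 4*(1-t)^2)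
              = ((7-2*t-t^2)*p + 4*(1-t))^2 + 4*((1-t)*(1-t)*(1-t))*(3+t) := by ring
          rw [e]
          have : 0 ≤ (1-t)*(1-t)*(1-t) := by
            have := sub_nonneg.2 ht1.le
            positivity
          nlinarith [sq_nonneg ((7-2*t-t^2)*p + 4*(1-t))]
        have hQ : 0 ≤ (7-2*t-t^2)*p^2 + 8*(1-t)*p + 4*(1-t)^2 := nonneg_of_mul_nonneg_right (by linarith [hQ7]) h7
        nlinarith [hQ, hm, hid]
      · have hs0 : s ≤ 0 := by
          by_contra hcon
          push_neg at hcon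
          exact absurd hrs (not_le.2 (mul_neg_of_neg_of_pos hr hcon))
        clear hid
        have h1r : (0:ℝ) ≤ 1 + r := by nlinarith [sq_nonneg (1+r), sq_nonneg s]
        have hx1 : (0:ℝ) ≤ (-p)*(1+r) := mul_nonneg (neg_nonneg.2 hp2) h1r
        have hx2 : (0:ℝ) ≤ (p+1)*(-s) := mul_nonneg (by linarith) (neg_nonneg.2 hs0)
        have hup : (0:ℝ) ≤ (2*t-1) * (1 - (p*r+(p+1)*s) - (1+p)) := by
          apply mul_nonneg (by linarith)
          nlinarith [hx1, hx2]
        have h4t : (0:ℝ) ≤ 4-(1+t)^2 := by nlinarith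
        have h3 : (0:ℝ) ≤ (4-(1+t)^2)*((p-r)^2+(p+1-s)^2) := mul_nonneg h4t (by positivity)
        have hdec : 8*((p-t*r)^2+(p+1-t*s)^2) - (1+t)^2*((p-r)^2+(p+1-s)^2)
            = 8*((1+p)-(1-t))^2 + 8*(2*t-1)*(1-(p*r+(p+1)*s)-(1+p))
              + (4-(1+t)^2)*((p-r)^2+(p+1-s)^2) := by
          linear_combination (8*t^2-4)*hb
        linarith [sq_nonneg ((1+p)-(1-t)), hup, h3, hdec]
  · have hzero : (p^2+(p+1)^2)*(r^2+s^2) = p^2+(p+1)^2 := by rw [hb]; ring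
    have hc : (p*r+(p+1)*s)^2 ≤ p^2+(p+1)^2 := by
      linarith [sq_nonneg (p*s-(p+1)*r), hzero]
    have e1 : (p-r)^2+(p+1-s)^2 = p^2+(p+1)^2 + 1 - 2*(p*r+(p+1)*s) := by
      linear_combination hb
    have hEw : (p-r)^2+(p+1-s)^2 ≤ 2*(p^2+(p+1)^2) + 2 := by
      linarith [hc, sq_nonneg (1+(p*r+(p+1)*s)), e1]
    have hq0 : (0:ℝ) ≤ (1-t)*(1+t) := mul_nonneg (by linarith) (by linarith)
    have h6 : (0:ℝ) ≤ 6+4*t-2*t^2 := by linarith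
    have hq1 : (0:ℝ) ≤ (6+4*t-2*t^2)*((p^2+(p+1)^2)-1/2) :=
      mul_nonneg h6 (by linarith)
    have hmain : 0 ≤ 8*(1-t)*((p^2+(p+1)^2) - t) - (t^2-6*t+1)*(2*(p^2+(p+1)^2) + 2) := by
      linarith [hq1, sq_nonneg t]
    have h4 : (t^2-6*t+1)*((p-r)^2+(p+1-s)^2) ≤ (t^2-6*t+1)*(2*(p^2+(p+1)^2) + 2) :=
      mul_le_mul_of_nonneg_left hEw hA.le
    linarith [hid]

private lemma dw_e3B1 (p r t : ℝ) (ht0 : 0 < t) (ht1 : t < 1) (hpq : p * (p+1) ≤ 0)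
    (hrs : r * (r-1) ≤ 0) :
    (1 + t) ^ 2 * ((p - r) ^ 2 + (p + 1 - (r-1)) ^ 2) ≤ 8 * ((p - t * r) ^ 2 + (p + 1 - t * (r-1)) ^ 2) := by
  have hp1 : -1 ≤ p := by nlinarith
  have hp2 : p ≤ 0 := by nlinarith
  have hr0 : 0 ≤ r := by nlinarith
  have hr1 : r ≤ 1 := by nlinarith
  have hy1 : p - t*r ≤ 0 := by nlinarith [mul_nonneg ht0.le hr0]
  have htr : t*r ≤ 1 := by nlinarith
  have hy2 : (0:ℝ) ≤ p - t*r + 1 + t := by nlinarith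
  have h16 : (0:ℝ) < 14-4*t-2*t^2 := by nlinarith
  have hpos0 : (0:ℝ) ≤ 4*(1+t)^3*(5-3*t) := by nlinarith [mul_nonneg (mul_nonneg (by nlinarith : (0:ℝ) ≤ (1+t)^2) (by linarith : (0:ℝ) ≤ 1+t)) (by linarith : (0:ℝ) ≤ 5-3*t)]
  have hP0 : 0 ≤ 8*(p-t*r)^2 + 8*(p-t*r+1+t)^2 - (1+t)^2*((p-t*r)^2+(p-t*r+2)^2) := by
    nlinarith [sq_nonneg ((14-4*t-2*t^2)*(p-t*r) + 2*(1+t)*(3-t)), hpos0, h16]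
  have hg : (0:ℝ) ≤ (1+t)^2*((14-4*t-2*t^2)*(6-2*t^2) - 4*(4-t-t^2)^2) := by
    have : (0:ℝ) ≤ (14-4*t-2*t^2)*(6-2*t^2) - 4*(4-t-t^2)^2 := by
      nlinarith [sq_nonneg t, sq_nonneg (1-t), sq_nonneg (t*(1-t)), sq_nonneg (t*t)]
    nlinarith [mul_nonneg (sq_nonneg (1+t)) this]
  have hP1 : 0 ≤ 8*(p-t*r)^2 + (8-(1+t)^2)*(p-t*r+1+t)^2 - (1+t)^2*(p-t*r-(1-t))^2 := by
    nlinarith [sq_nonneg ((14-4*t-2*t^2)*(p-t*r) + 2*(1+t)*(4-t-t^2)), hg, h16]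
  nlinarith [mul_nonneg (sub_nonneg.2 hr1) hP0, mul_nonneg hr0 hP1,
    mul_nonneg (mul_nonneg (mul_nonneg hr0 (sub_nonneg.2 hr1)) (sq_nonneg (1-t))) (sq_nonneg (1+t))]

private lemma dw_e3B2 (p r t : ℝ) (ht0 : 0 < t) (ht1 : t < 1) (hpq : p * (p+1) ≤ 0)
    (hrs : r * (r+1) ≤ 0) :
    (1 + t) ^ 2 * ((p - r) ^ 2 + (p + 1 - (r+1)) ^ 2) ≤ 8 * ((p - t * r) ^ 2 + (p + 1 - t * (r+1)) ^ 2) := by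
  have hr0 : r ≤ 0 := by nlinarith
  have hr1 : -1 ≤ r := by nlinarith
  have h13 : (0:ℝ) ≤ (1-t)*(3+t) := mul_nonneg (by linarith) (by linarith)
  nlinarith [mul_nonneg h13 (sq_nonneg (p - t*r)),
    mul_nonneg h13 (sq_nonneg (p - t*r + 1 - t)),
    mul_nonneg (mul_nonneg (neg_nonneg.2 hr0) (by linarith : (0:ℝ) ≤ 1+r)) (sq_nonneg (1-t)),
    mul_nonneg (neg_nonneg.2 hr0) (sq_nonneg (p-t*r)),
    mul_nonneg (by linarith : (0:ℝ) ≤ 1+r) (sq_nonneg (p-t*r+1-t)),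
    sq_nonneg (1+t)]

/-- u of type B with p - q = -1, v of either type. -/
private lemma dw_e3m (p q r s t : ℝ) (ht0 : 0 < t) (ht1 : t < 1)
    (hq : q = p + 1) (hpq : p * q ≤ 0)
    (hv : (0 ≤ r * s ∧ r ^ 2 + s ^ 2 = 1) ∨ (r * s ≤ 0 ∧ (r - s) ^ 2 = 1)) :
    (1 + t) ^ 2 * ((p - r) ^ 2 + (q - s) ^ 2) ≤ 8 * ((p - t * r) ^ 2 + (q - t * s) ^ 2) := by
  subst hq
  rcases hv with ⟨h1, h2⟩ | ⟨h1, h2⟩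
  · exact dw_e3A p r s t ht0 ht1 hpq h1 h2
  · have he : (r - s - 1) * (r - s + 1) = 0 := by linear_combination h2
    rcases mul_eq_zero.1 he with he1 | he1
    · have hs : s = r - 1 := by linarith
      subst hs
      exact dw_e3B1 p r t ht0 ht1 hpq (by linarith [h1])
    · have hs : s = r + 1 := by linarith
      subst hs
      exact dw_e3B2 p r t ht0 ht1 hpq (by linarith [h1])

/-- u of type B (either sign), v of either type. -/
private lemma dw_e3 (p q r s t : ℝ) (ht0 : 0 < t) (ht1 : t < 1)
    (hu1 : p * q ≤ 0) (hu2 : (p - q) ^ 2 = 1)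
    (hv : (0 ≤ r * s ∧ r ^ 2 + s ^ 2 = 1) ∨ (r * s ≤ 0 ∧ (r - s) ^ 2 = 1)) :
    (1 + t) ^ 2 * ((p - r) ^ 2 + (q - s) ^ 2) ≤ 8 * ((p - t * r) ^ 2 + (q - t * s) ^ 2) := by
  have hd : (p - q - 1) * (p - q + 1) = 0 := by linear_combination hu2
  rcases mul_eq_zero.1 hd with hd1 | hd1
  · -- p - q = 1 : apply the other case to the negated vectors
    have hv' : (0 ≤ (-r) * (-s) ∧ (-r) ^ 2 + (-s) ^ 2 = 1) ∨
        ((-r) * (-s) ≤ 0 ∧ ((-r) - (-s)) ^ 2 = 1) := by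
      rcases hv with ⟨h1, h2⟩ | ⟨h1, h2⟩
      · exact Or.inl ⟨by rw [neg_mul_neg]; exact h1, by linear_combination h2⟩
      · exact Or.inr ⟨by rw [neg_mul_neg]; exact h1, by linear_combination h2⟩
    have h := dw_e3m (-p) (-q) (-r) (-s) t ht0 ht1 (by linarith) (by nlinarith) hv'
    nlinarith [h]
  · exact dw_e3m p q r s t ht0 ht1 (by linarith) hu1 hv

/-- The central inequality at the level of squares of coordinates. -/
private lemma dw_key (p q r s t : ℝ) (ht0 : 0 < t) (ht1 : t < 1)
    (hu : (0 ≤ p*q ∧ p^2+q^2 = 1) ∨ (p*q ≤ 0 ∧ (p-q)^2 = 1))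
    (hv : (0 ≤ r*s ∧ r^2+s^2 = 1) ∨ (r*s ≤ 0 ∧ (r-s)^2 = 1)) :
    (1+t)^2 * (if 0 ≤ (p-r)*(q-s) then (p-r)^2+(q-s)^2 else ((p-r)-(q-s))^2)
      ≤ 8 * (if 0 ≤ (p-t*r)*(q-t*s) then (p-t*r)^2+(q-t*s)^2 else ((p-t*r)-(q-t*s))^2) := by
  set H := (if 0 ≤ (p-t*r)*(q-t*s) then (p-t*r)^2+(q-t*s)^2 else ((p-t*r)-(q-t*s))^2) with hHdef
  have hH1 : (p-t*r)^2+(q-t*s)^2 ≤ H := by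
    rw [hHdef]; split_ifs with h
    · exact le_refl _
    · push_neg at h
      nlinarith [h.le]
  have hH2 : ((p-t*r)-(q-t*s))^2 ≤ H := by
    rw [hHdef]; split_ifs with h
    · nlinarith [h]
    · exact le_refl _
  by_cases hw : 0 ≤ (p-r)*(q-s)
  · rw [if_pos hw]
    rcases hu with ⟨hu1, hu2⟩ | ⟨hu1, hu2⟩
    · have hvb : r^2+s^2 ≤ 1 := by
        rcases hv with ⟨h1, h2⟩ | ⟨h1, h2⟩
        · exact h2.le
        · nlinarith
      have hE := dw_e1 p q r s t ht0 ht1 hu2 hvb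
      linarith [hH1, sq_nonneg (p-t*r), sq_nonneg (q-t*s)]
    · have hE := dw_e3 p q r s t ht0 ht1 hu1 hu2 hv
      linarith [hH1]
  · rw [if_neg hw]
    rcases hu with ⟨hu1, hu2⟩ | ⟨hu1, hu2⟩
    · have hvb : r^2+s^2 ≤ 1 := by
        rcases hv with ⟨h1, h2⟩ | ⟨h1, h2⟩
        · exact h2.le
        · nlinarith
      have hE := dw_e1 p q r s t ht0 ht1 hu2 hvb
      have hG : ((p-r)-(q-s))^2 ≤ 2*((p-r)^2+(q-s)^2) := by nlinarith [sq_nonneg ((p-r)+(q-s))]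
      have hGm := mul_le_mul_of_nonneg_left hG (sq_nonneg (1+t))
      linarith [hH1, hGm]
    · have hvb : (r-s)^2 ≤ 1 := by
        rcases hv with ⟨h1, h2⟩ | ⟨h1, h2⟩
        · nlinarith
        · exact h2.le
      have hE := dw_e2 (p-q) (r-s) t ht0 ht1 hu2 hvb
      linarith [hE, hH2]

private lemma l2l1_nonneg (x : ℝ × ℝ) : 0 ≤ l2l1Norm x := by
  unfold l2l1Norm
  split_ifs
  · exact Real.sqrt_nonneg _
  · positivity

private lemma l2l1_sq (x : ℝ × ℝ) :
    (l2l1Norm x)^2 = if 0 ≤ x.1*x.2 then x.1^2+x.2^2 else (x.1-x.2)^2 := by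
  unfold l2l1Norm
  split_ifs with h
  · exact Real.sq_sqrt (by positivity)
  · push_neg at h
    have h2 : |x.1*x.2| = -(x.1*x.2) := abs_of_neg h
    have e : (|x.1|+|x.2|)^2 = x.1^2 + x.2^2 + 2*|x.1*x.2| := by
      rw [add_sq, sq_abs, sq_abs]
      linear_combination (-2 : ℝ) * (abs_mul x.1 x.2)
    rw [e, h2]; ring

private lemma l2l1_unit {x : ℝ × ℝ} (h : l2l1Norm x = 1) :
    (0 ≤ x.1*x.2 ∧ x.1^2+x.2^2 = 1) ∨ (x.1*x.2 ≤ 0 ∧ (x.1-x.2)^2 = 1) := by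
  have hs := l2l1_sq x
  rw [h, one_pow] at hs
  by_cases hc : 0 ≤ x.1*x.2
  · rw [if_pos hc] at hs
    exact Or.inl ⟨hc, hs.symm⟩
  · rw [if_neg hc] at hs
    push_neg at hc
    exact Or.inr ⟨hc.le, hs.symm⟩

/-- The upper bound. -/
private lemma dw_upper (u v : ℝ × ℝ) (t : ℝ) (hu : l2l1Norm u = 1) (hv : l2l1Norm v = 1)
    (ht0 : 0 < t) (ht1 : t < 1) :
    (1 + t) * l2l1Norm (u - v) ≤ 2 * Real.sqrt 2 * l2l1Norm (u - t • v) := by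
  have hsq : (1+t)^2 * (l2l1Norm (u-v))^2 ≤ 8 * (l2l1Norm (u - t • v))^2 := by
    rw [l2l1_sq, l2l1_sq]
    have e1 : (u - v).1 = u.1 - v.1 := rfl
    have e2 : (u - v).2 = u.2 - v.2 := rfl
    have e3 : (u - t • v).1 = u.1 - t * v.1 := rfl
    have e4 : (u - t • v).2 = u.2 - t * v.2 := rfl
    rw [e1, e2, e3, e4]
    exact dw_key u.1 u.2 v.1 v.2 t ht0 ht1 (l2l1_unit hu) (l2l1_unit hv)
  have ha : 0 ≤ (1 + t) * l2l1Norm (u - v) :=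
    mul_nonneg (by linarith) (l2l1_nonneg _)
  have hb : 0 ≤ 2 * Real.sqrt 2 * l2l1Norm (u - t • v) :=
    mul_nonneg (by positivity) (l2l1_nonneg _)
  have h8 : (2 * Real.sqrt 2 * l2l1Norm (u - t • v))^2 = 8 * (l2l1Norm (u - t • v))^2 := by
    have : (Real.sqrt 2)^2 = 2 := Real.sq_sqrt (by norm_num)
    ring_nf
    nlinarith [this]
  nlinarith [hsq, ha, hb, h8]

/-- The Dunkl–Williams constant of the `ℓ₂–ℓ₁` plane equals `2√2`. -/
theorem dunkl_williams_l2l1 :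
    sSup {c : ℝ | ∃ u v : ℝ × ℝ, ∃ t : ℝ, l2l1Norm u = 1 ∧ l2l1Norm v = 1 ∧
      0 < t ∧ t < 1 ∧ c = (1 + t) * l2l1Norm (u - v) / l2l1Norm (u - t • v)} =
    2 * Real.sqrt 2 := by
  set S := {c : ℝ | ∃ u v : ℝ × ℝ, ∃ t : ℝ, l2l1Norm u = 1 ∧ l2l1Norm v = 1 ∧
      0 < t ∧ t < 1 ∧ c = (1 + t) * l2l1Norm (u - v) / l2l1Norm (u - t • v)} with hS
  have hub : ∀ c ∈ S, c ≤ 2 * Real.sqrt 2 := by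
    rintro c ⟨u, v, t, hu, hv, ht0, ht1, rfl⟩
    rcases eq_or_lt_of_le (l2l1_nonneg (u - t • v)) with hz | hz
    · rw [← hz, div_zero]
      positivity
    · rw [div_le_iff₀ hz]
      exact dw_upper u v t hu hv ht0 ht1
  have hmem : ∀ t : ℝ, 0 < t → t < 1 → Real.sqrt 2 * (1 + t) ∈ S := by
    intro t ht0 ht1
    refine ⟨(t - 1, t), (0, 1), t, ?_, ?_, ht0, ht1, ?_⟩
    · unfold l2l1Norm
      rw [if_neg (by simp only; nlinarith)]
      simp only
      rw [abs_of_neg (by linarith), abs_of_pos ht0]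
      ring
    · unfold l2l1Norm
      norm_num
    · have e1 : ((t - 1, t) : ℝ × ℝ) - (0, 1) = (t - 1, t - 1) := by
        simp [Prod.ext_iff]
      have e2 : ((t - 1, t) : ℝ × ℝ) - t • (0, 1) = (t - 1, 0) := by
        simp [Prod.ext_iff]
      rw [e1, e2]
      unfold l2l1Norm
      rw [if_pos (by simp only; nlinarith [sq_nonneg (t-1)]),
        if_pos (by simp only; rw [mul_zero])]
      simp only
      have h1 : (t-1)^2 + (t-1)^2 = 2 * (1-t)^2 := by ring
      have h2 : (t-1)^2 + (0:ℝ)^2 = (1-t)^2 := by ring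
      rw [h1, h2, Real.sqrt_mul (by norm_num), Real.sqrt_sq (by linarith)]
      have hne : (1:ℝ) - t ≠ 0 := by linarith
      field_simp
  apply le_antisymm
  · exact Real.sSup_le hub (by positivity)
  · by_contra hcon
    push_neg at hcon
    set c := sSup S with hc
    have hbdd : BddAbove S := ⟨2 * Real.sqrt 2, hub⟩
    have hc0 : Real.sqrt 2 * (1 + 1/2) ≤ c := le_csSup hbdd (hmem (1/2) (by norm_num) (by norm_num))
    have hcpos : 0 < c := lt_of_lt_of_le (by positivity) hc0
    -- choose t ∈ (0,1) with √2 (1+t) > c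
    have h2pos : (0:ℝ) < Real.sqrt 2 := by positivity
    set m := max 0 (c / Real.sqrt 2 - 1) with hm
    have hm0 : 0 ≤ m := le_max_left _ _
    have hm1 : m < 1 := by
      have : c / Real.sqrt 2 - 1 < 1 := by
        rw [div_sub' (ne_of_gt h2pos), div_lt_one h2pos]
        nlinarith [Real.sq_sqrt (show (0:ℝ) ≤ 2 by norm_num)]
      exact max_lt (by norm_num) this
    set t := (m + 1) / 2 with htdef
    have ht0 : 0 < t := by rw [htdef]; linarith
    have ht1 : t < 1 := by rw [htdef]; linarith
    have hgt : c < Real.sqrt 2 * (1 + t) := by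
      have h1 : c / Real.sqrt 2 - 1 ≤ m := le_max_right _ _
      have h2 : m < t := by rw [htdef]; linarith
      have h3 : c / Real.sqrt 2 < 1 + t := by linarith
      calc c = Real.sqrt 2 * (c / Real.sqrt 2) := by field_simp
        _ < Real.sqrt 2 * (1 + t) := by
            exact mul_lt_mul_of_pos_left h3 h2pos
    exact absurd (le_csSup hbdd (hmem t ht0 ht1)) (not_le.2 hgt)
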